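/- Let L be a Lagrangian subspace of E^p and set S := pr_T(L). Then there exists an alternating (p+1)-form ω ∈ ⋀^{p+1} T* such that L = {(X, ι_X ω + α) : X ∈ S, α ∈ ⋀^p S°}. -/

import Mathlib

open Module

/-- `E^p` for `p = q+1`: the vector space `T ⊕ ⋀^{q+1} T*`. -/
abbrev EP (T : Type) [AddCommGroup T] [Module ℝ T] (q : ℕ) :=
  T × (T [⋀^Fin (q+1)]→ₗ[ℝ] ℝ)

variable {T : Type} [AddCommGroup T] [Module ℝ T]

/-- The `⋀^q T*`-valued pairing on `E^{q+1}`: `⟨(X,α),(Y,β)⟩ = ι_X β + ι_Y α`. -/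
noncomputable def pairing {q : ℕ} (e₁ e₂ : EP T q) : T [⋀^Fin q]→ₗ[ℝ] ℝ :=
  e₂.2.curryLeft e₁.1 + e₁.2.curryLeft e₂.1

def orthSet {q : ℕ} (L : Set (EP T q)) : Set (EP T q) :=
  {e | ∀ l ∈ L, pairing e l = 0}

def IsIsotropic {q : ℕ} (L : Set (EP T q)) : Prop :=
  ∀ e₁ ∈ L, ∀ e₂ ∈ L, pairing e₁ e₂ = 0

section Helpers


/-- wedge-building block: `v ↦ φ(v 0) • μ (tail v)` as a multilinear map. -/
noncomputable def bmap {n : ℕ} (φ : T →ₗ[ℝ] ℝ) (μ : T [⋀^Fin (n+1)]→ₗ[ℝ] ℝ) :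
    MultilinearMap ℝ (fun _ : Fin (n+2) => T) ℝ :=
  LinearMap.uncurryLeft (φ.smulRight μ.toMultilinearMap)

lemma bmap_apply {n : ℕ} (φ : T →ₗ[ℝ] ℝ) (μ : T [⋀^Fin (n+1)]→ₗ[ℝ] ℝ)
    (v : Fin (n+2) → T) : bmap φ μ v = φ (v 0) • μ (Fin.tail v) := rfl

lemma altzero {n : ℕ} (μ : T [⋀^Fin (n+1)]→ₗ[ℝ] ℝ) (X : T) (h : μ.curryLeft X = 0)
    (u : Fin (n+1) → T) (k : Fin (n+1)) (hk : u k = X) : μ u = 0 := by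
  have h0 : ∀ u : Fin (n+1) → T, u 0 = X → μ u = 0 := by
    intro u hu
    have : μ u = (μ.curryLeft (u 0)) (Fin.tail u) := by
      rw [AlternatingMap.curryLeft_apply_apply]
      congr 1
      exact (Fin.cons_self_tail u).symm
    rw [this, hu, h]
    rfl
  by_cases hk0 : k = 0
  · exact h0 u (hk0 ▸ hk)
  · have hne : (0 : Fin (n+1)) ≠ k := fun h' => hk0 h'.symm
    have hswap := μ.map_swap u hne
    have hz : μ (u ∘ Equiv.swap 0 k) = 0 := by
      refine h0 _ ?_
      simp [Equiv.swap_apply_left, hk]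
    rw [hz] at hswap
    linarith

lemma curry_antisymm {n : ℕ} (ω : T [⋀^Fin (n+2)]→ₗ[ℝ] ℝ) (X Y : T) :
    (ω.curryLeft X).curryLeft Y + (ω.curryLeft Y).curryLeft X = 0 := by
  have h := AlternatingMap.curryLeft_same ω (X + Y)
  simp only [map_add, AlternatingMap.curryLeft_add, LinearMap.add_apply,
    AlternatingMap.curryLeft_same] at h
  rw [zero_add, add_zero] at h
  rw [add_comm]
  exact h

lemma curry_alt {n : ℕ} (φ : T →ₗ[ℝ] ℝ) (μ : T [⋀^Fin (n+1)]→ₗ[ℝ] ℝ) (X : T)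
    (h : μ.curryLeft X = 0) :
    (MultilinearMap.alternatization (bmap φ μ)).curryLeft X
      = (Nat.factorial (n+1) : ℝ) • (φ X • μ) := by
  classical
  ext w
  set v : Fin (n+2) → T := Matrix.vecCons X w with hv
  have hv0 : v 0 = X := rfl
  have hvsucc : ∀ j : Fin (n+1), v j.succ = w j := fun j => rfl
  rw [AlternatingMap.curryLeft_apply_apply]
  show (MultilinearMap.alternatization (bmap φ μ)) v = _
  rw [MultilinearMap.alternatization_apply]
  simp only [MultilinearMap.domDomCongr_apply]
  rw [Finset.univ_perm_fin_succ, Finset.sum_map, Fintype.sum_prod_type,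
    Fin.sum_univ_succ]
  simp only [Equiv.coe_toEmbedding]
  have hzero : ∀ (j : Fin (n+1)) (τ : Equiv.Perm (Fin (n+1))),
      Equiv.Perm.sign (Equiv.Perm.decomposeFin.symm (j.succ, τ)) •
        (bmap φ μ) (fun i => v ((Equiv.Perm.decomposeFin.symm (j.succ, τ)) i)) = 0 := by
    intro j τ
    have hμz : μ (Fin.tail (fun i => v ((Equiv.Perm.decomposeFin.symm (j.succ, τ)) i))) = 0 := by
      refine altzero μ X h _ (τ⁻¹ j) ?_
      show v ((Equiv.Perm.decomposeFin.symm (j.succ, τ)) (τ⁻¹ j).succ) = X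
      rw [Equiv.Perm.decomposeFin_symm_apply_succ, Equiv.Perm.inv_def, Equiv.apply_symm_apply,
        Equiv.swap_apply_right]
      exact hv0
    rw [bmap_apply, hμz, smul_zero, smul_zero]
  have h2 : ∑ j : Fin (n+1), ∑ τ : Equiv.Perm (Fin (n+1)),
      Equiv.Perm.sign (Equiv.Perm.decomposeFin.symm (j.succ, τ)) •
        (bmap φ μ) (fun i => v ((Equiv.Perm.decomposeFin.symm (j.succ, τ)) i)) = 0 :=
    Finset.sum_eq_zero fun j _ => Finset.sum_eq_zero fun τ _ => hzero j τ
  rw [h2, add_zero]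
  have h3 : ∀ τ : Equiv.Perm (Fin (n+1)),
      Equiv.Perm.sign (Equiv.Perm.decomposeFin.symm ((0 : Fin (n+2)), τ)) •
        (bmap φ μ) (fun i => v ((Equiv.Perm.decomposeFin.symm ((0 : Fin (n+2)), τ)) i)) = φ X * μ w := by
    intro τ
    have hsign : Equiv.Perm.sign (Equiv.Perm.decomposeFin.symm ((0 : Fin (n+2)), τ))
        = Equiv.Perm.sign τ := by
      rw [Equiv.Perm.decomposeFin.symm_sign, if_pos rfl, one_mul]
    have harg : Fin.tail (fun i => v ((Equiv.Perm.decomposeFin.symm ((0 : Fin (n+2)), τ)) i)) = w ∘ τ := by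
      funext k
      show v ((Equiv.Perm.decomposeFin.symm ((0 : Fin (n+2)), τ)) k.succ) = w (τ k)
      rw [Equiv.Perm.decomposeFin_symm_apply_succ, Equiv.swap_self]
      exact hvsucc (τ k)
    have hhead : v ((Equiv.Perm.decomposeFin.symm ((0 : Fin (n+2)), τ)) 0) = X := by
      rw [Equiv.Perm.decomposeFin_symm_apply_zero]
      exact hv0
    rw [bmap_apply]
    show Equiv.Perm.sign (Equiv.Perm.decomposeFin.symm ((0 : Fin (n+2)), τ)) •
      (φ (v ((Equiv.Perm.decomposeFin.symm ((0 : Fin (n+2)), τ)) 0)) •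
        μ (Fin.tail (fun i => v ((Equiv.Perm.decomposeFin.symm ((0 : Fin (n+2)), τ)) i)))) = _
    rw [harg, hhead, AlternatingMap.map_perm, hsign]
    rcases Int.units_eq_one_or (Equiv.Perm.sign τ) with hs | hs <;>
      simp [hs, smul_eq_mul]
  rw [Finset.sum_congr rfl fun τ _ => h3 τ, Finset.sum_const, Finset.card_univ,
    Fintype.card_perm, Fintype.card_fin]
  simp [smul_eq_mul, mul_assoc]

lemma curryLeft_sub {n : ℕ} (f g : T [⋀^Fin (n+1)]→ₗ[ℝ] ℝ) (m : T) :
    (f - g).curryLeft m = f.curryLeft m - g.curryLeft m := by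
  ext v
  simp

lemma curryLeft_add' {n : ℕ} (f g : T [⋀^Fin (n+1)]→ₗ[ℝ] ℝ) (m : T) :
    (f + g).curryLeft m = f.curryLeft m + g.curryLeft m := by
  ext v
  simp

lemma curryLeft_smul' {n : ℕ} (c : ℝ) (f : T [⋀^Fin (n+1)]→ₗ[ℝ] ℝ) (m : T) :
    (c • f).curryLeft m = c • f.curryLeft m := by
  ext v
  simp

lemma exists_omega {q : ℕ} [FiniteDimensional ℝ T] (S : Submodule ℝ T)
    (ε : T →ₗ[ℝ] (T [⋀^Fin (q+1)]→ₗ[ℝ] ℝ))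
    (hiso : ∀ X ∈ S, ∀ Y ∈ S, (ε X).curryLeft Y + (ε Y).curryLeft X = 0) :
    ∀ (n : ℕ) (U : Submodule ℝ T), U ≤ S → finrank ℝ U ≤ n →
      ∃ ω : T [⋀^Fin (q+2)]→ₗ[ℝ] ℝ, ∀ X ∈ U, ∀ Z ∈ S,
        ((ε X - ω.curryLeft X).curryLeft Z) = 0 := by
  intro n
  induction n with
  | zero =>
    intro U hUS hr
    refine ⟨0, ?_⟩
    intro X hX Z hZ
    have hU : U = ⊥ := Submodule.finrank_eq_zero.mp (Nat.le_zero.mp hr)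
    rw [hU, Submodule.mem_bot] at hX
    subst hX
    simp
  | succ n ih =>
    intro U hUS hr
    by_cases hle : finrank ℝ U ≤ n
    · exact ih U hUS hle
    have hUne : U ≠ ⊥ := by
      intro hbot
      apply hle
      rw [hbot]
      simp
    obtain ⟨e, heU, hene⟩ := (Submodule.ne_bot_iff U).mp hUne
    have heS : e ∈ S := hUS heU
    obtain ⟨φ₀, hφ₀⟩ : ∃ φ₀ : T →ₗ[ℝ] ℝ, φ₀ e ≠ 0 := by
      by_contra hc
      push_neg at hc
      exact hene ((Module.forall_dual_apply_eq_zero_iff ℝ e).mp hc)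
    set φ : T →ₗ[ℝ] ℝ := (φ₀ e)⁻¹ • φ₀ with hφdef
    have hφe : φ e = 1 := by
      simp [hφdef, inv_mul_cancel₀ hφ₀]
    set U' : Submodule ℝ T := U ⊓ LinearMap.ker φ with hU'def
    have hU'S : U' ≤ S := le_trans inf_le_left hUS
    have hU'n : finrank ℝ U' ≤ n := by
      have h1 : U' < U := by
        refine lt_of_le_of_ne inf_le_left (fun heq => ?_)
        have : e ∈ U' := heq ▸ heU
        have : φ e = 0 := (Submodule.mem_inf.mp this).2
        rw [hφe] at this
        exact one_ne_zero this
      have := Submodule.finrank_lt_finrank_of_lt h1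
      omega
    obtain ⟨ω', hω'⟩ := ih U' hU'S hU'n
    set ε' : T →ₗ[ℝ] (T [⋀^Fin (q+1)]→ₗ[ℝ] ℝ) := ε - ω'.curryLeft with hε'def
    have hε'X : ∀ X : T, ε' X = ε X - ω'.curryLeft X := fun X => rfl
    have hiso' : ∀ X ∈ S, ∀ Y ∈ S, (ε' X).curryLeft Y + (ε' Y).curryLeft X = 0 := by
      intro X hX Y hY
      have h1 := hiso X hX Y hY
      have h2 := curry_antisymm ω' X Y
      rw [hε'X, hε'X, curryLeft_sub, curryLeft_sub]
      rw [show (ε X).curryLeft Y - (ω'.curryLeft X).curryLeft Y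
          + ((ε Y).curryLeft X - (ω'.curryLeft Y).curryLeft X)
          = ((ε X).curryLeft Y + (ε Y).curryLeft X)
            - ((ω'.curryLeft X).curryLeft Y + (ω'.curryLeft Y).curryLeft X) by abel]
      rw [h1, h2, sub_zero]
    have h1 : ∀ W ∈ U', ∀ Z ∈ S, (ε' W).curryLeft Z = 0 := fun W hW Z hZ => hω' W hW Z hZ
    have hee : (ε' e).curryLeft e = 0 := by
      have h2 := hiso' e heS e heS
      have h3 : (2:ℝ) • (ε' e).curryLeft e = 0 := by rw [two_smul]; exact h2
      calc (ε' e).curryLeft e = (2:ℝ)⁻¹ • ((2:ℝ) • (ε' e).curryLeft e) := by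
            rw [smul_smul]; norm_num
        _ = 0 := by rw [h3, smul_zero]
    have hdecomp : ∀ X ∈ U, X - φ X • e ∈ U' := by
      intro X hX
      refine Submodule.mem_inf.mpr ⟨sub_mem hX (Submodule.smul_mem _ _ heU), ?_⟩
      simp [LinearMap.mem_ker, map_sub, map_smul, hφe]
    have hμ : ∀ X ∈ U, (ε' e).curryLeft X = 0 := by
      intro X hX
      have hXS := hUS hX
      have hanti := hiso' X hXS e heS
      have hX'' : (ε' X).curryLeft e = 0 := by
        have hdec : ε' X = ε' (X - φ X • e) + φ X • ε' e := by
          rw [map_sub, map_smul]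
          abel
        rw [hdec, curryLeft_add', curryLeft_smul']
        rw [h1 _ (hdecomp X hX) e heS, hee, smul_zero, add_zero]
      rw [hX'', zero_add] at hanti
      exact hanti
    set μ : T [⋀^Fin (q+1)]→ₗ[ℝ] ℝ := ε' e with hμdef
    set Ω : T [⋀^Fin (q+2)]→ₗ[ℝ] ℝ := MultilinearMap.alternatization (bmap φ μ) with hΩdef
    set c : ℝ := ((Nat.factorial (q+1) : ℝ))⁻¹ with hcdef
    refine ⟨ω' + c • Ω, ?_⟩
    intro X hX Z hZ
    have hcurry : (ω' + c • Ω).curryLeft X = ω'.curryLeft X + φ X • μ := by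
      have hc := curry_alt φ μ X (hμ X hX)
      rw [curryLeft_add', curryLeft_smul', hc, smul_smul, smul_smul,
        inv_mul_cancel₀ (by exact_mod_cast Nat.factorial_ne_zero (q+1)), one_mul]
    have hkey : ε X - (ω' + c • Ω).curryLeft X = ε' (X - φ X • e) := by
      rw [hcurry, map_sub, map_smul, hε'X]
      abel
    rw [hkey]
    exact h1 _ (hdecomp X hX) Z hZ

set_option synthInstance.maxHeartbeats 1000000 in
set_option maxHeartbeats 2000000 in
lemma exists_section {q : ℕ} [FiniteDimensional ℝ T] (L : Submodule ℝ (EP T q)) :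
    ∃ ε : T →ₗ[ℝ] (T [⋀^Fin (q+1)]→ₗ[ℝ] ℝ),
      ∀ X ∈ L.map (LinearMap.fst ℝ T (T [⋀^Fin (q+1)]→ₗ[ℝ] ℝ)),
        ((X, ε X) : EP T q) ∈ L := by
  classical
  set F : EP T q →ₗ[ℝ] T := LinearMap.fst ℝ T (T [⋀^Fin (q+1)]→ₗ[ℝ] ℝ) with hF
  set Smap : Submodule ℝ T := L.map F with hSmap
  set pr : L →ₗ[ℝ] T := F.comp L.subtype with hpr
  have hrange : LinearMap.range pr = Smap := by
    rw [hpr, LinearMap.range_comp, Submodule.range_subtype, hSmap]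
  obtain ⟨g, hg⟩ := pr.rangeRestrict.exists_rightInverse_of_surjective
      (LinearMap.range_rangeRestrict pr)
  obtain ⟨C, hC⟩ := Submodule.exists_isCompl (LinearMap.range pr)
  set π : T →ₗ[ℝ] LinearMap.range pr := (LinearMap.range pr).linearProjOfIsCompl C hC with hπ
  refine ⟨((LinearMap.snd ℝ T (T [⋀^Fin (q+1)]→ₗ[ℝ] ℝ)).comp L.subtype).comp (g.comp π), ?_⟩
  intro X hX
  have hX' : X ∈ LinearMap.range pr := hrange ▸ hX
  have hπX : π X = ⟨X, hX'⟩ :=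
    Submodule.linearProjOfIsCompl_apply_left hC ⟨X, hX'⟩
  set l : L := g ⟨X, hX'⟩ with hl
  have h1 : pr.rangeRestrict l = ⟨X, hX'⟩ := by
    have := DFunLike.congr_fun hg (⟨X, hX'⟩ : LinearMap.range pr)
    exact this
  have h2 : pr l = X := congrArg Subtype.val h1
  have h3 : (((LinearMap.snd ℝ T (T [⋀^Fin (q+1)]→ₗ[ℝ] ℝ)).comp L.subtype).comp (g.comp π)) X
      = (l : EP T q).2 := by
    simp only [LinearMap.comp_apply, hπX]
    rfl
  have h4 : (l : EP T q).1 = X := h2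
  rw [h3, ← h4]
  exact l.2

end Helpers

theorem stmt2 [FiniteDimensional ℝ T] (q : ℕ) (hq : q + 1 ≤ finrank ℝ T)
    (L : Submodule ℝ (EP T q))
    (hLag : (L : Set (EP T q)) = orthSet (L : Set (EP T q))) :
    ∃ ω : T [⋀^Fin (q+2)]→ₗ[ℝ] ℝ,
      (L : Set (EP T q)) =
        {e : EP T q | ∃ X ∈ L.map (LinearMap.fst ℝ T (T [⋀^Fin (q+1)]→ₗ[ℝ] ℝ)),
          ∃ α : T [⋀^Fin (q+1)]→ₗ[ℝ] ℝ,
            (∀ Z ∈ L.map (LinearMap.fst ℝ T (T [⋀^Fin (q+1)]→ₗ[ℝ] ℝ)),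
              α.curryLeft Z = 0) ∧
            e = (X, ω.curryLeft X + α)} := by
  classical
  set F : EP T q →ₗ[ℝ] T := LinearMap.fst ℝ T (T [⋀^Fin (q+1)]→ₗ[ℝ] ℝ) with hF
  set Smap : Submodule ℝ T := L.map F with hSmap
  -- basic isotropy of L
  have hisoL : ∀ e₁ ∈ L, ∀ e₂ ∈ L, pairing e₁ e₂ = 0 := by
    intro e₁ h₁ e₂ h₂
    have h₁' : e₁ ∈ (L : Set (EP T q)) := h₁
    rw [hLag] at h₁'
    exact h₁' e₂ h₂
  -- construct a linear section ε
  obtain ⟨ε, hεmem⟩ := exists_section L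
  -- annihilator characterization
  have hannF : ∀ γ : T [⋀^Fin (q+1)]→ₗ[ℝ] ℝ, (((0 : T), γ) : EP T q) ∈ L →
      ∀ Z ∈ Smap, γ.curryLeft Z = 0 := by
    intro γ h0 Z hZ
    have := hisoL _ h0 _ (hεmem Z hZ)
    rw [pairing] at this
    simp only [map_zero] at this
    simpa using this
  have hannR : ∀ γ : T [⋀^Fin (q+1)]→ₗ[ℝ] ℝ, (∀ Z ∈ Smap, γ.curryLeft Z = 0) →
      (((0 : T), γ) : EP T q) ∈ L := by
    intro γ hγ
    have : (((0 : T), γ) : EP T q) ∈ (L : Set (EP T q)) := by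
      rw [hLag]
      intro l hl
      have hl1 : l.1 ∈ Smap := ⟨l, hl, rfl⟩
      rw [pairing]
      simp only [map_zero]
      rw [hγ l.1 hl1]
      simp
    exact this
  -- isotropy of ε
  have hiso : ∀ X ∈ Smap, ∀ Y ∈ Smap, (ε X).curryLeft Y + (ε Y).curryLeft X = 0 := by
    intro X hX Y hY
    have := hisoL _ (hεmem X hX) _ (hεmem Y hY)
    rw [pairing] at this
    rw [add_comm]
    exact this
  obtain ⟨ω, hω⟩ := exists_omega Smap ε hiso (finrank ℝ Smap) Smap le_rfl le_rfl
  refine ⟨ω, ?_⟩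
  ext e
  constructor
  · intro he
    have heL : e ∈ L := he
    have hX : e.1 ∈ Smap := ⟨e, heL, rfl⟩
    refine ⟨e.1, hX, e.2 - ω.curryLeft e.1, ?_, ?_⟩
    · intro Z hZ
      have hsplit : e.2 - ω.curryLeft e.1
          = (e.2 - ε e.1) + (ε e.1 - ω.curryLeft e.1) := by abel
      rw [hsplit, curryLeft_add']
      have hmem0 : (((0 : T), e.2 - ε e.1) : EP T q) ∈ L := by
        have : (((0 : T), e.2 - ε e.1) : EP T q) = e - ((e.1, ε e.1) : EP T q) := by
          refine Prod.ext ?_ rfl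
          simp
        rw [this]
        exact sub_mem heL (hεmem e.1 hX)
      rw [hannF _ hmem0 Z hZ, hω e.1 hX Z hZ, add_zero]
    · refine Prod.ext rfl ?_
      show e.2 = ω.curryLeft e.1 + (e.2 - ω.curryLeft e.1)
      abel
  · rintro ⟨X, hX, α, hα, rfl⟩
    have : ((X, ω.curryLeft X + α) : EP T q) ∈ (L : Set (EP T q)) := by
      rw [hLag]
      intro l hl
      have hl1 : l.1 ∈ Smap := ⟨l, hl, rfl⟩
      have hβ : (((0 : T), l.2 - ε l.1) : EP T q) ∈ L := by
        have : (((0 : T), l.2 - ε l.1) : EP T q) = l - ((l.1, ε l.1) : EP T q) := by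
          refine Prod.ext ?_ rfl
          simp
        rw [this]
        exact sub_mem hl (hεmem l.1 hl1)
      rw [pairing]
      show l.2.curryLeft X + (ω.curryLeft X + α).curryLeft l.1 = 0
      have hdecompl : l.2 = ((l.2 - ε l.1) + (ε l.1 - ω.curryLeft l.1)) + ω.curryLeft l.1 := by
        abel
      rw [hdecompl, curryLeft_add', curryLeft_add', curryLeft_add']
      rw [hannF _ hβ X hX, hω l.1 hl1 X hX, hα l.1 hl1]
      simp only [zero_add, add_zero]
      exact curry_antisymm ω l.1 X
    exact this
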